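/- arXiv:1506.04996 — 8 statements merged into one kernel-verified Lean document; each statement's English description precedes it below -/
import Mathlib

section
/- Let A be a finite-dimensional Leibniz algebra over an infinite field, H a generalized Frattini ideal of A, and N an ideal of A contained in H. Then N is also a generalized Frattini ideal of A. -/
namespace Leib

variable (F : Type*) [Field F] {A : Type*} [NonUnitalNonAssocRing A]
  [Module F A] [SMulCommClass F A A] [IsScalarTower F A A]

/-- `S` is a subalgebra: a submodule closed under multiplication. -/
def IsSubalg (S : Submodule F A) : Prop := ∀ x ∈ S, ∀ y ∈ S, x * y ∈ S

/-- `S` is a (two-sided) ideal of the Leibniz algebra `A`. -/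
def IsIdeal (S : Submodule F A) : Prop := ∀ a : A, ∀ s ∈ S, a * s ∈ S ∧ s * a ∈ S

/-- The normalizer `N_A(C)` of a subspace `C` in `A`. -/
def normalizer (C : Submodule F A) : Submodule F A where
  carrier := {a | ∀ c ∈ C, a * c ∈ C ∧ c * a ∈ C}
  zero_mem' := by intro c hc; simp [C.zero_mem]
  add_mem' := by
    intro a b ha hb c hc
    exact ⟨by rw [add_mul]; exact C.add_mem (ha c hc).1 (hb c hc).1,
           by rw [mul_add]; exact C.add_mem (ha c hc).2 (hb c hc).2⟩
  smul_mem' := by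
    intro r a ha c hc
    exact ⟨by rw [smul_mul_assoc]; exact C.smul_mem r (ha c hc).1,
           by rw [mul_smul_comm]; exact C.smul_mem r (ha c hc).2⟩

/-- The span of all products `s * t` with `s ∈ S`, `t ∈ T`. -/
def mulSpan (S T : Submodule F A) : Submodule F A :=
  Submodule.span F {x | ∃ s ∈ S, ∃ t ∈ T, x = s * t}

/-- The (left-normed) lower central series of a subspace `S`:
`S, S·S, S·(S·S), …`. -/
def lcs (S : Submodule F A) : ℕ → Submodule F A
  | 0 => S
  | n + 1 => mulSpan F S (lcs S n)

/-- `S` is nilpotent. -/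
def IsNilp (S : Submodule F A) : Prop := ∃ n, lcs F S n = ⊥

/-- The derived series of a subspace `S`. -/
def derSeries (S : Submodule F A) : ℕ → Submodule F A
  | 0 => S
  | n + 1 => mulSpan F (derSeries S n) (derSeries S n)

/-- `S` is solvable. -/
def IsSolv (S : Submodule F A) : Prop := ∃ n, derSeries F S n = ⊥

/-- `C` is a Cartan subalgebra of the subalgebra `K`: a nilpotent subalgebra of `K`
that is self-normalizing in `K`. -/
def IsCartanOf (K C : Submodule F A) : Prop :=
  C ≤ K ∧ IsSubalg F C ∧ IsNilp F C ∧ normalizer F C ⊓ K = C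

/-- `H` is a generalized Frattini ideal (Cartan-subalgebra definition): `H` is proper and
whenever `A = H + N_A(C)` for `C` a Cartan subalgebra of an ideal `K` of `A`,
it follows that `A = N_A(C)`. -/
def GenFrattiniC (H : Submodule F A) : Prop :=
  H ≠ ⊤ ∧ ∀ K C : Submodule F A, IsIdeal F K → IsCartanOf F K C →
    H ⊔ normalizer F C = ⊤ → normalizer F C = ⊤

/-- `H` is a generalized Frattini ideal (nilpotency characterization): `H` is proper and
every ideal `J ⊇ H` with `J/H` nilpotent is nilpotent. -/
def GenFrattiniN (H : Submodule F A) : Prop :=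
  H ≠ ⊤ ∧ ∀ J : Submodule F A, IsIdeal F J → H ≤ J →
    (∃ n, lcs F J n ≤ H) → IsNilp F J

/-- The center `Z(A)`. -/
def center : Submodule F A where
  carrier := {z | ∀ a : A, z * a = 0 ∧ a * z = 0}
  zero_mem' := by intro a; simp
  add_mem' := by
    intro x y hx hy a
    exact ⟨by rw [add_mul, (hx a).1, (hy a).1, add_zero],
           by rw [mul_add, (hx a).2, (hy a).2, add_zero]⟩
  smul_mem' := by
    intro r x hx a
    exact ⟨by rw [smul_mul_assoc, (hx a).1, smul_zero],
           by rw [mul_smul_comm, (hx a).2, smul_zero]⟩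

/-- `M` is a maximal subalgebra of `A`. -/
def IsMaxSubalg (M : Submodule F A) : Prop :=
  IsSubalg F M ∧ M ≠ ⊤ ∧ ∀ S : Submodule F A, IsSubalg F S → M < S → S = ⊤

/-- `I` is a maximal ideal of `A`. -/
def IsMaxIdeal (I : Submodule F A) : Prop :=
  IsIdeal F I ∧ I ≠ ⊤ ∧ ∀ J : Submodule F A, IsIdeal F J → I < J → J = ⊤

/-- `K` is a primitive ideal: `Φ(A/K) = 0`, `A/K` has a unique minimal ideal, and
`dim (A/K) > 1`.  (Ideals and maximal subalgebras of `A/K` are stated via the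
correspondence with ideals and maximal subalgebras of `A` containing `K`.) -/
def IsPrimitiveIdeal (K : Submodule F A) : Prop :=
  IsIdeal F K ∧
  (∀ J : Submodule F A, IsIdeal F J → K ≤ J →
      (∀ M : Submodule F A, IsMaxSubalg F M → K ≤ M → J ≤ M) → J = K) ∧
  (∃! B : Submodule F A, IsIdeal F B ∧ K < B ∧
      ∀ B' : Submodule F A, IsIdeal F B' → K < B' → ¬ B' < B) ∧
  1 < Module.finrank F (A ⧸ K)

end Leib

open Leib in
/-- an ideal contained in a generalized Frattini ideal is generalized
Frattini. -/
theorem genFrattini_of_le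
    {F : Type*} [Field F] [Infinite F] {A : Type*} [NonUnitalNonAssocRing A]
    [Module F A] [SMulCommClass F A A] [IsScalarTower F A A] [Module.Finite F A]
    (leib : ∀ a b c : A, a * (b * c) = a * b * c + b * (a * c))
    (H N : Submodule F A) (hH : IsIdeal F H) (hGF : GenFrattiniC F H)
    (hN : IsIdeal F N) (hNH : N ≤ H) :
    GenFrattiniC F N := by
  refine ⟨fun h => hGF.1 (top_unique (h ▸ hNH)), fun K C hK hC hsup => ?_⟩
  exact hGF.2 K C hK hC (top_unique (hsup ▸ sup_le_sup_right hNH _))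
end

section
/- Let A be a finite-dimensional Leibniz algebra over an infinite field and H a generalized Frattini ideal of A. If H + Z(A) is a proper subalgebra of A, where Z(A) is the center, then H + Z(A) is a generalized Frattini ideal of A. -/
open Leib in
/-- if `H` is generalized Frattini and `H + Z(A)` is proper,
then `H + Z(A)` is generalized Frattini. -/
theorem genFrattini_sup_center
    {F : Type*} [Field F] [Infinite F] {A : Type*} [NonUnitalNonAssocRing A]
    [Module F A] [SMulCommClass F A A] [IsScalarTower F A A] [Module.Finite F A]
    (leib : ∀ a b c : A, a * (b * c) = a * b * c + b * (a * c))
    (H : Submodule F A) (hH : IsIdeal F H) (hGF : GenFrattiniC F H)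
    (hprop : H ⊔ center F ≠ (⊤ : Submodule F A)) :
    GenFrattiniC F (H ⊔ center F) := by
  refine ⟨hprop, ?_⟩
  intro K C hK hC htop
  apply hGF.2 K C hK hC
  have hZ : center F ≤ normalizer F C := by
    intro z hz c hc
    exact ⟨by rw [(hz c).1]; exact C.zero_mem, by rw [(hz c).2]; exact C.zero_mem⟩
  rw [sup_assoc, sup_eq_right.mpr hZ] at htop
  exact htop
end

section
/- Every proper ideal of a finite-dimensional nilpotent Leibniz algebra A is a generalized Frattini ideal of A. -/
open Leib in
lemma lcs_mul_lcs
    {F : Type*} [Field F] {A : Type*} [NonUnitalNonAssocRing A]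
    [Module F A] [SMulCommClass F A A] [IsScalarTower F A A]
    (leib : ∀ a b c : A, a * (b * c) = a * b * c + b * (a * c)) :
    ∀ m n : ℕ, ∀ x ∈ lcs F (⊤ : Submodule F A) m, ∀ y ∈ lcs F (⊤ : Submodule F A) n,
      x * y ∈ lcs F (⊤ : Submodule F A) (m + n + 1) := by
  intro m
  induction m with
  | zero =>
    intro n x _ y hy
    have : x * y ∈ lcs F (⊤ : Submodule F A) (n + 1) :=
      Submodule.subset_span ⟨x, trivial, y, hy, rfl⟩
    simpa [Nat.zero_add] using this
  | succ m ih =>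
    intro n x hx y hy
    induction hx using Submodule.span_induction with
    | mem x hxmem =>
      obtain ⟨a, -, t, ht, rfl⟩ := hxmem
      have key : a * t * y = a * (t * y) - t * (a * y) := by
        rw [leib a t y, add_sub_cancel_right]
      rw [key]
      refine Submodule.sub_mem _ ?_ ?_
      · have h1 : t * y ∈ lcs F (⊤ : Submodule F A) (m + n + 1) := ih n t ht y hy
        have : a * (t * y) ∈ lcs F (⊤ : Submodule F A) (m + n + 1 + 1) :=
          Submodule.subset_span ⟨a, trivial, t * y, h1, rfl⟩
        convert this using 2; omega
      · have h2 : a * y ∈ lcs F (⊤ : Submodule F A) (n + 1) :=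
          Submodule.subset_span ⟨a, trivial, y, hy, rfl⟩
        have := ih (n + 1) t ht (a * y) h2
        convert this using 2; omega
    | zero => simpa using Submodule.zero_mem _
    | add u v _ _ hu hv => rw [add_mul]; exact Submodule.add_mem _ hu hv
    | smul r u _ hu => rw [smul_mul_assoc]; exact Submodule.smul_mem _ r hu

open Leib in
lemma cartan_of_ideal_eq
    {F : Type*} [Field F] {A : Type*} [NonUnitalNonAssocRing A]
    [Module F A] [SMulCommClass F A A] [IsScalarTower F A A]
    (leib : ∀ a b c : A, a * (b * c) = a * b * c + b * (a * c))
    (hA : IsNilp F (⊤ : Submodule F A))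
    (K C : Submodule F A) (hK : IsIdeal F K) (hC : IsCartanOf F K C) :
    C = K := by
  classical
  refine le_antisymm hC.1 ?_
  by_contra hKC
  obtain ⟨N, hN⟩ := hA
  have hex : ∃ j, lcs F (⊤ : Submodule F A) j ⊓ K ≤ C := ⟨N, by rw [hN]; simp⟩
  set j := Nat.find hex with hj
  have hspec : lcs F (⊤ : Submodule F A) j ⊓ K ≤ C := Nat.find_spec hex
  have hj0 : j ≠ 0 := by
    intro h0
    apply hKC
    have := hspec
    rw [h0] at this
    simpa [lcs] using this
  have hmin : ¬ (lcs F (⊤ : Submodule F A) (j - 1) ⊓ K ≤ C) :=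
    Nat.find_min hex (by omega)
  obtain ⟨x, hx, hxC⟩ := SetLike.not_le_iff_exists.mp hmin
  apply hxC
  have hxn : x ∈ normalizer F C ⊓ K := by
    refine ⟨?_, hx.2⟩
    intro c hc
    have hctop : c ∈ lcs F (⊤ : Submodule F A) 0 := by simp [lcs]
    constructor
    · have h1 : x * c ∈ lcs F (⊤ : Submodule F A) (j - 1 + 0 + 1) :=
        lcs_mul_lcs leib (j - 1) 0 x hx.1 c hctop
      have h2 : j - 1 + 0 + 1 = j := by omega
      rw [h2] at h1
      exact hspec ⟨h1, (hK c x hx.2).2⟩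
    · have h1 : c * x ∈ lcs F (⊤ : Submodule F A) (0 + (j - 1) + 1) :=
        lcs_mul_lcs leib 0 (j - 1) c hctop x hx.1
      have h2 : 0 + (j - 1) + 1 = j := by omega
      rw [h2] at h1
      exact hspec ⟨h1, (hK c x hx.2).1⟩
  rw [hC.2.2.2] at hxn
  exact hxn

open Leib in
/-- every proper ideal of a finite-dimensional nilpotent Leibniz algebra
is generalized Frattini. -/
theorem genFrattini_of_nilpotent
    {F : Type*} [Field F] {A : Type*} [NonUnitalNonAssocRing A]
    [Module F A] [SMulCommClass F A A] [IsScalarTower F A A] [Module.Finite F A]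
    (leib : ∀ a b c : A, a * (b * c) = a * b * c + b * (a * c))
    (hA : IsNilp F (⊤ : Submodule F A))
    (H : Submodule F A) (hH : IsIdeal F H) (hprop : H ≠ ⊤) :
    GenFrattiniC F H := by
  refine ⟨hprop, fun K C hK hC _ => ?_⟩
  have hCK : C = K := cartan_of_ideal_eq leib hA K C hK hC
  rw [Submodule.eq_top_iff']
  intro a
  intro c hc
  rw [hCK] at hc ⊢
  exact ⟨(hK a c hc).1, (hK a c hc).2⟩
end

section
/- There exists a 3-dimensional Lie algebra A with ideals H and K such that H and K are generalized Frattini ideals of A but H + K is not a generalized Frattini ideal of A. -/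
namespace FratEx

def L : Type := Fin 3 → ℝ

instance : AddCommGroup L := Pi.addCommGroup
noncomputable instance : Module ℝ L := Pi.module (Fin 3) (fun _ => ℝ) ℝ

def lmul (a b : L) : L := ![a 0 * b 2 - a 2 * b 0, a 2 * b 1 - a 1 * b 2, 0]

instance : Mul L := ⟨lmul⟩

lemma add_apply (a b : L) (i : Fin 3) : (a + b) i = a i + b i := rfl
lemma zero_apply (i : Fin 3) : (0 : L) i = 0 := rfl
lemma smul_apply (r : ℝ) (a : L) (i : Fin 3) : (r • a) i = r * a i := rfl
lemma neg_apply (a : L) (i : Fin 3) : (-a) i = -(a i) := rfl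
lemma mul_apply0 (a b : L) : (a * b) 0 = a 0 * b 2 - a 2 * b 0 := rfl
lemma mul_apply1 (a b : L) : (a * b) 1 = a 2 * b 1 - a 1 * b 2 := rfl
lemma mul_apply2 (a b : L) : (a * b) 2 = 0 := rfl

lemma ext3 (a b : L) (h0 : a 0 = b 0) (h1 : a 1 = b 1) (h2 : a 2 = b 2) : a = b := by
  funext i
  match i with
  | 0 => exact h0
  | 1 => exact h1
  | 2 => exact h2

noncomputable instance : NonUnitalNonAssocRing L where
  __ := (inferInstance : AddCommGroup L)
  mul := lmul
  left_distrib := by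
    intro a b c
    exact ext3 _ _ (by simp [mul_apply0, add_apply]; ring)
      (by simp [mul_apply1, add_apply]; ring) (by simp [mul_apply2, add_apply])
  right_distrib := by
    intro a b c
    exact ext3 _ _ (by simp [mul_apply0, add_apply]; ring)
      (by simp [mul_apply1, add_apply]; ring) (by simp [mul_apply2, add_apply])
  zero_mul := by
    intro a
    exact ext3 _ _ (by simp [mul_apply0, zero_apply])
      (by simp [mul_apply1, zero_apply]) (by simp [mul_apply2, zero_apply])
  mul_zero := by
    intro a
    exact ext3 _ _ (by simp [mul_apply0, zero_apply])
      (by simp [mul_apply1, zero_apply]) (by simp [mul_apply2, zero_apply])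

instance : SMulCommClass ℝ L L :=
  ⟨fun r a b => ext3 _ _
    (by simp [mul_apply0, smul_apply]; ring)
    (by simp [mul_apply1, smul_apply]; ring)
    (by simp [mul_apply2, smul_apply])⟩

instance : IsScalarTower ℝ L L :=
  ⟨fun r a b => ext3 _ _
    (by simp [mul_apply0, smul_apply]; ring)
    (by simp [mul_apply1, smul_apply]; ring)
    (by simp [mul_apply2, smul_apply])⟩

lemma finrankL : Module.finrank ℝ L = 3 := by
  show Module.finrank ℝ (Fin 3 → ℝ) = 3
  simp

lemma leibniz (a b c : L) : a * (b * c) = a * b * c + b * (a * c) :=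
  ext3 _ _
    (by simp [add_apply, mul_apply0, mul_apply1, mul_apply2]; ring)
    (by simp [add_apply, mul_apply0, mul_apply1, mul_apply2]; ring)
    (by simp [add_apply, mul_apply0, mul_apply1, mul_apply2])

lemma sq_zero (a : L) : a * a = 0 :=
  ext3 _ _ (by simp [mul_apply0, zero_apply]; ring)
    (by simp [mul_apply1, zero_apply]; ring) (by simp [mul_apply2, zero_apply])

end FratEx

namespace FratEx
open Leib

noncomputable def xv : L := ![1, 0, 0]
noncomputable def yv : L := ![0, 1, 0]
noncomputable def zv : L := ![0, 0, 1]

lemma xv0 : xv 0 = 1 := rfl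
lemma xv1 : xv 1 = 0 := rfl
lemma xv2 : xv 2 = 0 := rfl
lemma yv0 : yv 0 = 0 := rfl
lemma yv1 : yv 1 = 1 := rfl
lemma yv2 : yv 2 = 0 := rfl
lemma zv0 : zv 0 = 0 := rfl
lemma zv2 : zv 2 = 1 := rfl

noncomputable def Hsub : Submodule ℝ L where
  carrier := {a | a 1 = 0 ∧ a 2 = 0}
  zero_mem' := ⟨rfl, rfl⟩
  add_mem' := fun ha hb => ⟨by simp [add_apply, ha.1, hb.1], by simp [add_apply, ha.2, hb.2]⟩
  smul_mem' := fun r a ha => ⟨by simp [smul_apply, ha.1], by simp [smul_apply, ha.2]⟩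

noncomputable def Ksub : Submodule ℝ L where
  carrier := {a | a 0 = 0 ∧ a 2 = 0}
  zero_mem' := ⟨rfl, rfl⟩
  add_mem' := fun ha hb => ⟨by simp [add_apply, ha.1, hb.1], by simp [add_apply, ha.2, hb.2]⟩
  smul_mem' := fun r a ha => ⟨by simp [smul_apply, ha.1], by simp [smul_apply, ha.2]⟩

lemma mem_Hsub {a : L} : a ∈ Hsub ↔ a 1 = 0 ∧ a 2 = 0 := Iff.rfl
lemma mem_Ksub {a : L} : a ∈ Ksub ↔ a 0 = 0 ∧ a 2 = 0 := Iff.rfl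

lemma Hsub_ideal : IsIdeal ℝ Hsub := fun a s hs =>
  ⟨⟨by simp [mul_apply1, hs.1, hs.2], mul_apply2 a s⟩,
   ⟨by simp [mul_apply1, hs.1, hs.2], mul_apply2 s a⟩⟩

lemma Ksub_ideal : IsIdeal ℝ Ksub := fun a s hs =>
  ⟨⟨by simp [mul_apply0, hs.1, hs.2], mul_apply2 a s⟩,
   ⟨by simp [mul_apply0, hs.1, hs.2], mul_apply2 s a⟩⟩

lemma mem_sup_of_snd_zero {a : L} (h : a 2 = 0) : a ∈ Hsub ⊔ Ksub := by
  have : a = (![a 0, 0, 0] : L) + (![0, a 1, 0] : L) := by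
    refine ext3 _ _ ?_ ?_ ?_
    · show a 0 = (![a 0, 0, 0] : L) 0 + (![0, a 1, 0] : L) 0
      show a 0 = a 0 + 0; ring
    · show a 1 = (![a 0, 0, 0] : L) 1 + (![0, a 1, 0] : L) 1
      show a 1 = 0 + a 1; ring
    · show a 2 = (![a 0, 0, 0] : L) 2 + (![0, a 1, 0] : L) 2
      rw [h]; show (0:ℝ) = 0 + 0; ring
  rw [this]
  exact Submodule.add_mem _
    (Submodule.mem_sup_left (mem_Hsub.mpr ⟨rfl, rfl⟩))
    (Submodule.mem_sup_right (mem_Ksub.mpr ⟨rfl, rfl⟩))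

/-- if every element of `J` has vanishing `z`-coordinate, then `J` is abelian. -/
lemma lcs_one_eq_bot {J : Submodule ℝ L} (h : ∀ a ∈ J, a 2 = 0) :
    lcs ℝ J 1 = ⊥ := by
  rw [eq_bot_iff]
  show mulSpan ℝ J (lcs ℝ J 0) ≤ ⊥
  rw [mulSpan, Submodule.span_le]
  rintro p ⟨s, hs, t, ht, rfl⟩
  have : s * t = 0 := ext3 _ _
    (by simp [mul_apply0, h s hs, h t ht, zero_apply])
    (by simp [mul_apply1, h s hs, h t ht, zero_apply])
    (by simp [mul_apply2, zero_apply])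
  simp [this]

/-- self-reproducing element in lcs. -/
lemma mem_lcs_of_fix {J : Submodule ℝ L} {s v : L} (hs : s ∈ J) (hv : v ∈ J)
    (hfix : s * v = v) : ∀ n, v ∈ lcs ℝ J n := by
  intro n
  induction n with
  | zero => exact hv
  | succ n ih =>
    show v ∈ mulSpan ℝ J (lcs ℝ J n)
    exact Submodule.subset_span ⟨s, hs, v, ih, hfix.symm⟩

lemma genFrattini_Hsub : GenFrattiniN ℝ Hsub := by
  constructor
  · intro h
    have : zv ∈ Hsub := h ▸ Submodule.mem_top
    exact one_ne_zero this.2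
  · rintro J hJ hHJ ⟨n, hn⟩
    by_cases hc : ∀ a ∈ J, a 2 = 0
    · exact ⟨1, lcs_one_eq_bot hc⟩
    · push_neg at hc
      obtain ⟨a, haJ, ha2⟩ := hc
      set s : L := (a 2)⁻¹ • a with hs_def
      have hsJ : s ∈ J := J.smul_mem _ haJ
      have hs2 : s 2 = 1 := by
        show (a 2)⁻¹ * a 2 = 1
        exact inv_mul_cancel₀ ha2
      have hfix : s * yv = yv := ext3 _ _
        (by simp [mul_apply0, yv0, yv2])
        (by simp [mul_apply1, yv1, yv2, hs2])
        (by simp [mul_apply2, yv2])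
      have hyJ : yv ∈ J := by
        have := (hJ yv s hsJ).2
        rwa [hfix] at this
      have := (hn (mem_lcs_of_fix hsJ hyJ hfix n)).1
      rw [yv1] at this
      exact absurd this one_ne_zero

lemma genFrattini_Ksub : GenFrattiniN ℝ Ksub := by
  constructor
  · intro h
    have : zv ∈ Ksub := h ▸ Submodule.mem_top
    exact one_ne_zero this.2
  · rintro J hJ hHJ ⟨n, hn⟩
    by_cases hc : ∀ a ∈ J, a 2 = 0
    · exact ⟨1, lcs_one_eq_bot hc⟩
    · push_neg at hc
      obtain ⟨a, haJ, ha2⟩ := hc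
      set s : L := -((a 2)⁻¹ • a) with hs_def
      have hsJ : s ∈ J := J.neg_mem (J.smul_mem _ haJ)
      have hs2 : s 2 = -1 := by
        show -((a 2)⁻¹ * a 2) = -1
        rw [inv_mul_cancel₀ ha2]
      have hfix : s * xv = xv := ext3 _ _
        (by simp [mul_apply0, xv0, xv2, hs2])
        (by simp [mul_apply1, xv1, xv2])
        (by simp [mul_apply2, xv2])
      have hxJ : xv ∈ J := by
        have := (hJ xv s hsJ).2
        rwa [hfix] at this
      have := (hn (mem_lcs_of_fix hsJ hxJ hfix n)).1
      rw [xv0] at this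
      exact absurd this one_ne_zero

lemma not_genFrattini_sup : ¬ GenFrattiniN ℝ (Hsub ⊔ Ksub) := by
  rintro ⟨-, h⟩
  have hlcs : lcs ℝ (⊤ : Submodule ℝ L) 1 ≤ Hsub ⊔ Ksub := by
    show mulSpan ℝ ⊤ (lcs ℝ (⊤ : Submodule ℝ L) 0) ≤ _
    rw [mulSpan, Submodule.span_le]
    rintro p ⟨s, -, t, -, rfl⟩
    exact mem_sup_of_snd_zero (mul_apply2 s t)
  obtain ⟨n, hn⟩ := h ⊤ (fun a s _ => ⟨trivial, trivial⟩) le_top ⟨1, hlcs⟩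
  have hneg : (-zv : L) * xv = xv := ext3 _ _
    (by simp [mul_apply0, neg_apply, zv0, zv2, xv0, xv2])
    (by simp [mul_apply1, neg_apply, xv1, xv2])
    (by simp [mul_apply2, xv2])
  have hx : xv ∈ lcs ℝ (⊤ : Submodule ℝ L) n :=
    mem_lcs_of_fix Submodule.mem_top Submodule.mem_top hneg n
  rw [hn] at hx
  have : xv = 0 := by simpa using hx
  have := congrFun this 0
  rw [xv0, zero_apply] at this
  exact one_ne_zero this

end FratEx


open Leib in
/-- there exists a 3-dimensional Lie algebra `A` (over a field of
characteristic 0, here `ℝ`) with generalized Frattini ideals `H`, `K` such that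
`H + K` is not generalized Frattini. -/
theorem exists_sum_not_genFrattini :
    ∃ (A : Type) (_ : NonUnitalNonAssocRing A) (_ : Module ℝ A)
      (_ : SMulCommClass ℝ A A) (_ : IsScalarTower ℝ A A),
      (∀ a b c : A, a * (b * c) = a * b * c + b * (a * c)) ∧
      (∀ a : A, a * a = 0) ∧
      Module.finrank ℝ A = 3 ∧
      ∃ H K : Submodule ℝ A, IsIdeal ℝ H ∧ IsIdeal ℝ K ∧
        GenFrattiniN ℝ H ∧ GenFrattiniN ℝ K ∧ ¬ GenFrattiniN ℝ (H ⊔ K) := by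
  exact ⟨FratEx.L, inferInstance, inferInstance, inferInstance, inferInstance,
    FratEx.leibniz, FratEx.sq_zero, FratEx.finrankL,
    FratEx.Hsub, FratEx.Ksub, FratEx.Hsub_ideal, FratEx.Ksub_ideal,
    FratEx.genFrattini_Hsub, FratEx.genFrattini_Ksub, FratEx.not_genFrattini_sup⟩
end

section
/- Let A be a finite-dimensional Leibniz algebra over an infinite field, H a generalized Frattini ideal of A, and K an ideal of A containing H. Then K/H is a generalized Frattini ideal of A/H if and only if K is a generalized Frattini ideal of A. -/
open Leib in
/-- for a generalized Frattini ideal `H` and an ideal `K ⊇ H`,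
`K/H` is generalized Frattini in `A/H` iff `K` is generalized Frattini in `A`.
(The generalized Frattini property of `K/H` in `A/H` is expressed via the
correspondence between ideals of `A/H` and ideals of `A` containing `H`:
`K/H` is proper, and every ideal `J ⊇ K` of `A` with `J/K` nilpotent has
`J/H` nilpotent.) -/
theorem quotient_genFrattini_iff
    {F : Type*} [Field F] [Infinite F] {A : Type*} [NonUnitalNonAssocRing A]
    [Module F A] [SMulCommClass F A A] [IsScalarTower F A A] [Module.Finite F A]
    (leib : ∀ a b c : A, a * (b * c) = a * b * c + b * (a * c))
    (H K : Submodule F A) (hH : IsIdeal F H) (hGF : GenFrattiniN F H)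
    (hK : IsIdeal F K) (hHK : H ≤ K) :
    (K ≠ ⊤ ∧ ∀ J : Submodule F A, IsIdeal F J → K ≤ J →
        (∃ n, lcs F J n ≤ K) → (∃ m, lcs F J m ≤ H))
      ↔ GenFrattiniN F K := by
  constructor
  · rintro ⟨hKtop, hq⟩
    refine ⟨hKtop, fun J hJ hKJ hn => ?_⟩
    obtain ⟨m, hm⟩ := hq J hJ hKJ hn
    exact hGF.2 J hJ (hHK.trans hKJ) ⟨m, hm⟩
  · rintro ⟨hKtop, hN⟩
    refine ⟨hKtop, fun J hJ hKJ hn => ?_⟩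
    obtain ⟨m, hm⟩ := hN J hJ hKJ hn
    exact ⟨m, hm ▸ bot_le⟩
end

section
/- Let A be a finite-dimensional Leibniz algebra over an infinite field such that the nilradical Nil(A) is a generalized Frattini ideal of A. Then every solvable ideal of A is nilpotent, and hence is contained in Nil(A) and is itself generalized Frattini in A. -/
section Aux

open Leib

variable {F : Type*} [Field F] {A : Type*} [NonUnitalNonAssocRing A]
  [Module F A] [SMulCommClass F A A] [IsScalarTower F A A]

lemma mulSpan_le_of {S T U : Submodule F A}
    (h : ∀ s ∈ S, ∀ t ∈ T, s * t ∈ U) : mulSpan F S T ≤ U := by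
  rw [mulSpan, Submodule.span_le]
  rintro x ⟨s, hs, t, ht, rfl⟩
  exact h s hs t ht

lemma mul_mem_mulSpan {S T : Submodule F A} {s t : A} (hs : s ∈ S) (ht : t ∈ T) :
    s * t ∈ mulSpan F S T :=
  Submodule.subset_span ⟨s, hs, t, ht, rfl⟩

lemma mulSpan_mono {S S' T T' : Submodule F A} (h1 : S ≤ S') (h2 : T ≤ T') :
    mulSpan F S T ≤ mulSpan F S' T' :=
  mulSpan_le_of fun s hs t ht => mul_mem_mulSpan (h1 hs) (h2 ht)

lemma lcs_mono {S T : Submodule F A} (h : S ≤ T) : ∀ n, lcs F S n ≤ lcs F T n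
  | 0 => h
  | n + 1 => mulSpan_mono h (lcs_mono h n)

lemma isNilp_of_le {S T : Submodule F A} (h : S ≤ T) (hT : IsNilp F T) : IsNilp F S := by
  obtain ⟨n, hn⟩ := hT
  exact ⟨n, le_bot_iff.mp (hn ▸ lcs_mono h n)⟩

lemma sup_isIdeal {S T : Submodule F A} (hS : IsIdeal F S) (hT : IsIdeal F T) :
    IsIdeal F (S ⊔ T) := by
  intro a x hx
  rw [Submodule.mem_sup] at hx
  obtain ⟨s, hs, t, ht, rfl⟩ := hx
  constructor
  · rw [mul_add]
    exact Submodule.add_mem _ (Submodule.mem_sup_left (hS a s hs).1)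
      (Submodule.mem_sup_right (hT a t ht).1)
  · rw [add_mul]
    exact Submodule.add_mem _ (Submodule.mem_sup_left (hS a s hs).2)
      (Submodule.mem_sup_right (hT a t ht).2)

lemma mulSpan_self_isIdeal (leib : ∀ a b c : A, a * (b * c) = a * b * c + b * (a * c))
    {S : Submodule F A} (hS : IsIdeal F S) : IsIdeal F (mulSpan F S S) := by
  intro a x hx
  induction hx using Submodule.span_induction with
  | mem x hx =>
    obtain ⟨s, hs, t, ht, rfl⟩ := hx
    constructor
    · rw [leib a s t]
      exact Submodule.add_mem _ (mul_mem_mulSpan (hS a s hs).1 ht)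
        (mul_mem_mulSpan hs (hS a t ht).1)
    · have h : (s * t) * a = s * (t * a) - t * (s * a) := by
        rw [leib s t a]; abel
      rw [h]
      exact Submodule.sub_mem _ (mul_mem_mulSpan hs (hS a t ht).2)
        (mul_mem_mulSpan ht (hS a s hs).2)
  | zero => simp
  | add x y _ _ hx hy =>
    exact ⟨by rw [mul_add]; exact Submodule.add_mem _ hx.1 hy.1,
           by rw [add_mul]; exact Submodule.add_mem _ hx.2 hy.2⟩
  | smul r x _ hx =>
    exact ⟨by rw [mul_smul_comm]; exact Submodule.smul_mem _ r hx.1,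
           by rw [smul_mul_assoc]; exact Submodule.smul_mem _ r hx.2⟩

lemma lcs_sup_le {J N : Submodule F A} (hN : IsIdeal F N) :
    ∀ k, lcs F (J ⊔ N) k ≤ lcs F J k ⊔ N
  | 0 => le_rfl
  | k + 1 => by
    refine le_trans (mulSpan_mono le_rfl (lcs_sup_le hN k)) (mulSpan_le_of ?_)
    intro s hs t ht
    rw [Submodule.mem_sup] at hs ht
    obtain ⟨j, hj, n, hn, rfl⟩ := hs
    obtain ⟨u, hu, m, hm, rfl⟩ := ht
    have : (j + n) * (u + m) = j * u + (j * m + n * (u + m)) := by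
      rw [add_mul, mul_add, add_assoc]
    rw [this]
    refine Submodule.add_mem _ (Submodule.mem_sup_left (mul_mem_mulSpan hj hu))
      (Submodule.mem_sup_right (Submodule.add_mem _ (hN j m hm).1 ?_))
    exact (hN (u + m) n hn).2

lemma derSeries_succ_shift {S : Submodule F A} :
    ∀ n, derSeries F S (n + 1) = derSeries F (mulSpan F S S) n
  | 0 => rfl
  | n + 1 => by
    show mulSpan F (derSeries F S (n+1)) (derSeries F S (n+1)) = _
    rw [derSeries_succ_shift n]; rfl

end Aux

open Leib in
/-- if `Nil(A)` is generalized Frattini, then every solvable ideal of `A`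
is nilpotent, hence contained in `Nil(A)`, and is itself generalized Frattini. -/
theorem solvable_ideal_nilpotent_of_nil_genFrattini
    {F : Type*} [Field F] [Infinite F] {A : Type*} [NonUnitalNonAssocRing A]
    [Module F A] [SMulCommClass F A A] [IsScalarTower F A A] [Module.Finite F A]
    (leib : ∀ a b c : A, a * (b * c) = a * b * c + b * (a * c))
    (N : Submodule F A) (hN : IsIdeal F N) (hNnilp : IsNilp F N)
    (hNmax : ∀ M : Submodule F A, IsIdeal F M → IsNilp F M → M ≤ N)
    (hGF : GenFrattiniN F N) :
    ∀ S : Submodule F A, IsIdeal F S → IsSolv F S →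
      IsNilp F S ∧ S ≤ N ∧ GenFrattiniN F S := by
  -- key claim: any solvable ideal is contained in N
  have key : ∀ n, ∀ S : Submodule F A, IsIdeal F S → derSeries F S n = ⊥ → S ≤ N := by
    intro n
    induction n with
    | zero => intro S _ h; rw [show derSeries F S 0 = S from rfl] at h; simp [h]
    | succ n ih =>
      intro S hS hd
      have hS' : IsIdeal F (mulSpan F S S) := mulSpan_self_isIdeal leib hS
      have hd' : derSeries F (mulSpan F S S) n = ⊥ := by
        rw [← derSeries_succ_shift]; exact hd
      have hS'N : mulSpan F S S ≤ N := ih _ hS' hd'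
      -- J = S ⊔ N
      have hJ : IsIdeal F (S ⊔ N) := sup_isIdeal hS hN
      have h1 : lcs F (S ⊔ N) 1 ≤ N := by
        refine le_trans (lcs_sup_le hN 1) (sup_le ?_ le_rfl)
        exact le_trans (le_of_eq rfl) (hS'N)
      have hnilJ : IsNilp F (S ⊔ N) := hGF.2 _ hJ le_sup_right ⟨1, h1⟩
      exact le_trans le_sup_left (hNmax _ hJ hnilJ)
  intro S hS hsolv
  obtain ⟨n, hn⟩ := hsolv
  have hSN : S ≤ N := key n S hS hn
  refine ⟨isNilp_of_le hSN hNnilp, hSN, ?_, ?_⟩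
  · intro htop
    exact hGF.1 (top_le_iff.mp (htop ▸ hSN))
  · intro J hJ hSJ ⟨m, hm⟩
    have hJ' : IsIdeal F (J ⊔ N) := sup_isIdeal hJ hN
    have h1 : lcs F (J ⊔ N) m ≤ N :=
      le_trans (lcs_sup_le hN m) (sup_le (le_trans hm hSN) le_rfl)
    have hnil : IsNilp F (J ⊔ N) := hGF.2 _ hJ' le_sup_right ⟨m, h1⟩
    exact isNilp_of_le le_sup_left hnil
end

section
/- Let A be a finite-dimensional Leibniz algebra over an infinite field. If Nil(A) is a generalized Frattini ideal of A, then A is not solvable. -/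
section Aux

open Leib

variable {F : Type*} [Field F] {A : Type*} [NonUnitalNonAssocRing A]
  [Module F A] [SMulCommClass F A A] [IsScalarTower F A A]

lemma isIdeal_mulSpan (leib : ∀ a b c : A, a * (b * c) = a * b * c + b * (a * c))
    {D : Submodule F A} (hD : IsIdeal F D) : IsIdeal F (mulSpan F D D) := by
  intro a s hs
  refine Submodule.span_induction ?_ ?_ ?_ ?_ hs
  · rintro x ⟨d, hd, d', hd', rfl⟩
    constructor
    · rw [leib a d d']
      exact (mulSpan F D D).add_mem
        (Submodule.subset_span ⟨_, (hD a d hd).1, _, hd', rfl⟩)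
        (Submodule.subset_span ⟨_, hd, _, (hD a d' hd').1, rfl⟩)
    · have h := leib d d' a
      have : d * d' * a = d * (d' * a) - d' * (d * a) := by
        rw [h]; abel
      rw [this]
      exact (mulSpan F D D).sub_mem
        (Submodule.subset_span ⟨_, hd, _, (hD a d' hd').2, rfl⟩)
        (Submodule.subset_span ⟨_, hd', _, (hD a d hd).2, rfl⟩)
  · simp
  · intro x y _ _ hx hy
    exact ⟨by rw [mul_add]; exact (mulSpan F D D).add_mem hx.1 hy.1,
           by rw [add_mul]; exact (mulSpan F D D).add_mem hx.2 hy.2⟩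
  · intro r x _ hx
    exact ⟨by rw [mul_smul_comm]; exact (mulSpan F D D).smul_mem r hx.1,
           by rw [smul_mul_assoc]; exact (mulSpan F D D).smul_mem r hx.2⟩

lemma isIdeal_sup {I J : Submodule F A} (hI : IsIdeal F I) (hJ : IsIdeal F J) :
    IsIdeal F (I ⊔ J) := by
  intro a s hs
  rcases Submodule.mem_sup.mp hs with ⟨x, hx, y, hy, rfl⟩
  constructor
  · rw [mul_add]
    exact Submodule.add_mem_sup (hI a x hx).1 (hJ a y hy).1
  · rw [add_mul]
    exact Submodule.add_mem_sup (hI a x hx).2 (hJ a y hy).2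

lemma isIdeal_derSeries (leib : ∀ a b c : A, a * (b * c) = a * b * c + b * (a * c))
    (k : ℕ) : IsIdeal F (derSeries F (⊤ : Submodule F A) k) := by
  induction k with
  | zero => intro a s _; exact ⟨Submodule.mem_top, Submodule.mem_top⟩
  | succ n ih => exact isIdeal_mulSpan leib ih

end Aux

open Leib in
/-- if `Nil(A)` is generalized Frattini, then `A` is not solvable. -/
theorem not_solvable_of_nil_genFrattini
    {F : Type*} [Field F] [Infinite F] {A : Type*} [NonUnitalNonAssocRing A]
    [Module F A] [SMulCommClass F A A] [IsScalarTower F A A] [Module.Finite F A]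
    (leib : ∀ a b c : A, a * (b * c) = a * b * c + b * (a * c))
    (N : Submodule F A) (hN : IsIdeal F N) (hNnilp : IsNilp F N)
    (hNmax : ∀ M : Submodule F A, IsIdeal F M → IsNilp F M → M ≤ N)
    (hGF : GenFrattiniN F N) :
    ¬ IsSolv F (⊤ : Submodule F A) := by
  rintro ⟨n, hn⟩
  -- key step: if derSeries (k+1) ≤ N then derSeries k ≤ N
  have key : ∀ k : ℕ, derSeries F (⊤ : Submodule F A) (k + 1) ≤ N →
      derSeries F (⊤ : Submodule F A) k ≤ N := by
    intro k hk
    set D := derSeries F (⊤ : Submodule F A) k with hDdef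
    set J := N ⊔ D with hJdef
    have hJideal : IsIdeal F J := isIdeal_sup hN (isIdeal_derSeries leib k)
    have hNJ : N ≤ J := le_sup_left
    have hlcs : lcs F J 1 ≤ N := by
      show mulSpan F J (lcs F J 0) ≤ N
      refine Submodule.span_le.mpr ?_
      rintro x ⟨s, hs, t, ht, rfl⟩
      rcases Submodule.mem_sup.mp hs with ⟨a, ha, d, hd, rfl⟩
      rcases Submodule.mem_sup.mp ht with ⟨a', ha', d', hd', rfl⟩
      have h1 : a * (a' + d') ∈ N := (hN (a' + d') a ha).2
      have h2 : d * a' ∈ N := (hN d a' ha').1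
      have h3 : d * d' ∈ N := hk (Submodule.subset_span ⟨d, hd, d', hd', rfl⟩)
      have : (a + d) * (a' + d') = a * (a' + d') + d * a' + d * d' := by
        rw [add_mul, mul_add, mul_add]; abel
      rw [this]
      exact N.add_mem (N.add_mem h1 h2) h3
    have hJnilp : IsNilp F J := hGF.2 J hJideal hNJ ⟨1, hlcs⟩
    have hJN : J ≤ N := hNmax J hJideal hJnilp
    exact le_trans le_sup_right hJN
  have main : ∀ k : ℕ, derSeries F (⊤ : Submodule F A) k ≤ N →
      (⊤ : Submodule F A) ≤ N := by
    intro k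
    induction k with
    | zero => exact fun h => h
    | succ m ih => exact fun h => ih (key m h)
  have : (⊤ : Submodule F A) ≤ N := main n (hn ▸ bot_le)
  exact hGF.1 (top_le_iff.mp this)
end

section
/- Let A be a finite-dimensional non-nilpotent Leibniz algebra over an infinite field. Then Nil(A) is a generalized Frattini ideal of A if and only if Nil(A) = Rad(A), where Rad(A) is the maximal solvable ideal of A. -/
namespace Leib

variable (F : Type*) [Field F] {A : Type*} [NonUnitalNonAssocRing A]
  [Module F A] [SMulCommClass F A A] [IsScalarTower F A A]

lemma mul_mem_mulSpan {S T : Submodule F A} {s t : A} (hs : s ∈ S) (ht : t ∈ T) :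
    s * t ∈ mulSpan F S T :=
  Submodule.subset_span ⟨s, hs, t, ht, rfl⟩

lemma mulSpan_le {S T U : Submodule F A} (h : ∀ s ∈ S, ∀ t ∈ T, s * t ∈ U) :
    mulSpan F S T ≤ U := by
  refine Submodule.span_le.2 ?_
  rintro x ⟨s, hs, t, ht, rfl⟩
  exact h s hs t ht

lemma mulSpan_mono {S T S' T' : Submodule F A} (hS : S ≤ S') (hT : T ≤ T') :
    mulSpan F S T ≤ mulSpan F S' T' :=
  mulSpan_le F fun s hs t ht => mul_mem_mulSpan F (hS hs) (hT ht)

lemma mulSpan_self_le {J : Submodule F A} (hJ : IsIdeal F J) : mulSpan F J J ≤ J :=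
  mulSpan_le F fun s hs t ht => (hJ s t ht).1

lemma isIdeal_sup {S T : Submodule F A} (hS : IsIdeal F S) (hT : IsIdeal F T) :
    IsIdeal F (S ⊔ T) := by
  intro a s hs
  rcases Submodule.mem_sup.1 hs with ⟨x, hx, y, hy, rfl⟩
  constructor
  · rw [mul_add]
    exact Submodule.add_mem_sup (hS a x hx).1 (hT a y hy).1
  · rw [add_mul]
    exact Submodule.add_mem_sup (hS a x hx).2 (hT a y hy).2

lemma isIdeal_mulSpan (leib : ∀ a b c : A, a * (b * c) = a * b * c + b * (a * c))
    {J : Submodule F A} (hJ : IsIdeal F J) : IsIdeal F (mulSpan F J J) := by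
  intro a x hx
  constructor
  · induction hx using Submodule.span_induction with
    | mem x hx =>
      rcases hx with ⟨s, hs, t, ht, rfl⟩
      rw [leib a s t]
      exact Submodule.add_mem _ (mul_mem_mulSpan F (hJ a s hs).1 ht)
        (mul_mem_mulSpan F hs (hJ a t ht).1)
    | zero => simpa using (mulSpan F J J).zero_mem
    | add x y _ _ hx hy => rw [mul_add]; exact Submodule.add_mem _ hx hy
    | smul r x _ hx => rw [mul_smul_comm]; exact Submodule.smul_mem _ r hx
  · induction hx using Submodule.span_induction with
    | mem x hx =>
      rcases hx with ⟨s, hs, t, ht, rfl⟩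
      have h := leib s t a
      have : s * t * a = s * (t * a) - t * (s * a) := by
        rw [h]; abel
      rw [this]
      exact Submodule.sub_mem _ (mul_mem_mulSpan F hs (hJ a t ht).2)
        (mul_mem_mulSpan F ht (hJ a s hs).2)
    | zero => simpa using (mulSpan F J J).zero_mem
    | add x y _ _ hx hy => rw [add_mul]; exact Submodule.add_mem _ hx hy
    | smul r x _ hx => rw [smul_mul_assoc]; exact Submodule.smul_mem _ r hx

lemma mulSpan_sup_le {X : Submodule F A} {N : Submodule F A} (hN : IsIdeal F N) :
    mulSpan F (X ⊔ N) (X ⊔ N) ≤ mulSpan F X X ⊔ N := by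
  refine mulSpan_le F ?_
  intro s hs t ht
  rcases Submodule.mem_sup.1 hs with ⟨x, hx, n, hn, rfl⟩
  rcases Submodule.mem_sup.1 ht with ⟨y, hy, m, hm, rfl⟩
  have : (x + n) * (y + m) = x * y + (x * m + (n * y + n * m)) := by
    rw [add_mul, mul_add, mul_add]; abel
  rw [this]
  refine Submodule.add_mem_sup (mul_mem_mulSpan F hx hy) ?_
  exact N.add_mem (hN x m hm).1 (N.add_mem (hN y n hn).2 (hN n m hm).1)

lemma derSeries_mono {S T : Submodule F A} (h : S ≤ T) (k : ℕ) :
    derSeries F S k ≤ derSeries F T k := by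
  induction k with
  | zero => exact h
  | succ k ih => exact mulSpan_mono F ih ih

lemma derSeries_le_self {J : Submodule F A} (hJ : IsIdeal F J) (k : ℕ) :
    derSeries F J k ≤ J := by
  induction k with
  | zero => exact le_rfl
  | succ k ih => exact le_trans (mulSpan_mono F ih ih) (mulSpan_self_le F hJ)

lemma derSeries_le_lcs {J : Submodule F A} (hJ : IsIdeal F J) (k : ℕ) :
    derSeries F J k ≤ lcs F J k := by
  induction k with
  | zero => exact le_rfl
  | succ k ih => exact mulSpan_mono F (derSeries_le_self F hJ k) ih

lemma derSeries_add (S : Submodule F A) (m n : ℕ) :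
    derSeries F S (m + n) = derSeries F (derSeries F S m) n := by
  induction n with
  | zero => rfl
  | succ n ih =>
    calc derSeries F S (m + (n + 1))
        = mulSpan F (derSeries F S (m + n)) (derSeries F S (m + n)) := rfl
      _ = mulSpan F (derSeries F (derSeries F S m) n) (derSeries F (derSeries F S m) n) := by
          rw [ih]
      _ = derSeries F (derSeries F S m) (n + 1) := rfl

lemma isSolv_of_isNilp {J : Submodule F A} (hJ : IsIdeal F J) (h : IsNilp F J) :
    IsSolv F J := by
  obtain ⟨n, hn⟩ := h
  exact ⟨n, le_bot_iff.1 (hn ▸ derSeries_le_lcs F hJ n)⟩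

lemma isSolv_of_le {J R : Submodule F A} (h : J ≤ R) (hR : IsSolv F R) : IsSolv F J := by
  obtain ⟨n, hn⟩ := hR
  exact ⟨n, le_bot_iff.1 (hn ▸ derSeries_mono F h n)⟩

end Leib

open Leib in
/-- for a non-nilpotent `A`, `Nil(A)` is generalized Frattini iff
`Nil(A) = Rad(A)`. -/
theorem nil_genFrattini_iff_eq_rad
    {F : Type*} [Field F] [Infinite F] {A : Type*} [NonUnitalNonAssocRing A]
    [Module F A] [SMulCommClass F A A] [IsScalarTower F A A] [Module.Finite F A]
    (leib : ∀ a b c : A, a * (b * c) = a * b * c + b * (a * c))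
    (hAnotnilp : ¬ IsNilp F (⊤ : Submodule F A))
    (N : Submodule F A) (hN : IsIdeal F N) (hNnilp : IsNilp F N)
    (hNmax : ∀ M : Submodule F A, IsIdeal F M → IsNilp F M → M ≤ N)
    (R : Submodule F A) (hR : IsIdeal F R) (hRsolv : IsSolv F R)
    (hRmax : ∀ S : Submodule F A, IsIdeal F S → IsSolv F S → S ≤ R) :
    GenFrattiniN F N ↔ N = R := by
  have hNne : N ≠ ⊤ := by
    intro h
    exact hAnotnilp (h ▸ hNnilp)
  have hNR : N ≤ R := hRmax N hN (isSolv_of_isNilp F hN hNnilp)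
  -- any ideal J ⊇ N with J/N "nilpotent" is solvable
  have hsolv : ∀ J : Submodule F A, IsIdeal F J → (∃ n, lcs F J n ≤ N) → IsSolv F J := by
    intro J hJ ⟨n, hn⟩
    obtain ⟨m, hm⟩ := isSolv_of_isNilp F hN hNnilp
    refine ⟨n + m, le_bot_iff.1 ?_⟩
    rw [derSeries_add]
    calc derSeries F (derSeries F J n) m
        ≤ derSeries F N m := derSeries_mono F (le_trans (derSeries_le_lcs F hJ n) hn) m
      _ = ⊥ := hm
  constructor
  · rintro ⟨-, hfrat⟩
    refine le_antisymm hNR ?_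
    by_contra hRN
    have hNltR : N < R := lt_of_le_of_ne hNR (fun h => hRN (h ▸ le_rfl))
    -- strong induction on finrank: no ideal strictly between N and R (inclusive of R)
    have key : ∀ k : ℕ, ∀ J : Submodule F A, Module.finrank F J = k →
        IsIdeal F J → N < J → J ≤ R → False := by
      intro k
      induction k using Nat.strong_induction_on with
      | _ k ih =>
        intro J hrk hJ hNJ hJR
        set D := N ⊔ mulSpan F J J with hD
        have hDideal : IsIdeal F D := isIdeal_sup F hN (isIdeal_mulSpan F leib hJ)
        have hDJ : D ≤ J := sup_le (le_of_lt hNJ) (mulSpan_self_le F hJ)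
        have hND : N ≤ D := le_sup_left
        rcases lt_or_eq_of_le hDJ with hDltJ | hDeqJ
        · rcases lt_or_eq_of_le hND with hNltD | hNeqD
          · exact ih (Module.finrank F D) (hrk ▸ Submodule.finrank_lt_finrank_of_lt hDltJ)
              D rfl hDideal hNltD (le_trans hDJ hJR)
          · -- J·J ≤ N, so J/N is abelian, apply the Frattini property
            have hJJ : lcs F J 1 ≤ N := by
              show mulSpan F J (lcs F J 0) ≤ N
              calc mulSpan F J (lcs F J 0) ≤ D := le_sup_right
                _ = N := hNeqD.symm
            have hJnilp : IsNilp F J := hfrat J hJ (le_of_lt hNJ) ⟨1, hJJ⟩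
            exact absurd (hNmax J hJ hJnilp) (not_le_of_gt hNJ)
        · -- D = J : contradicts solvability of J
          have hJsolv : IsSolv F J := isSolv_of_le F hJR hRsolv
          have hstep : ∀ k : ℕ, N ⊔ derSeries F J k = J := by
            intro k
            induction k with
            | zero => exact sup_eq_right.2 (le_of_lt hNJ)
            | succ k ihk =>
              refine le_antisymm ?_ ?_
              · exact sup_le (le_of_lt hNJ)
                  (le_trans (derSeries_le_self F hJ (k + 1)) le_rfl)
              · conv_lhs => rw [← hDeqJ, hD]
                refine sup_le le_sup_left ?_
                calc mulSpan F J J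
                    = mulSpan F (derSeries F J k ⊔ N) (derSeries F J k ⊔ N) := by
                      rw [sup_comm, ihk]
                  _ ≤ mulSpan F (derSeries F J k) (derSeries F J k) ⊔ N :=
                      mulSpan_sup_le F hN
                  _ = N ⊔ derSeries F J (k + 1) := sup_comm _ _
          obtain ⟨m, hm⟩ := hJsolv
          have : N = J := by
            have := hstep m
            rwa [hm, sup_bot_eq] at this
          exact absurd this (ne_of_lt hNJ)
    exact key (Module.finrank F R) R rfl hR hNltR le_rfl
  · intro hNeqR
    refine ⟨hNne, fun J hJ hNJ hlcs => ?_⟩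
    have hJsolv : IsSolv F J := hsolv J hJ hlcs
    have hJN : J ≤ N := hNeqR ▸ hRmax J hJ hJsolv
    have : J = N := le_antisymm hJN hNJ
    exact this ▸ hNnilp
end
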